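/- For each n, equip Ω_n = {0,1}^n with the uniform probability measure, and for 0 ≤ k ≤ n let E^*_k denote the averaging operator (E^*_k f)(x_1,…,x_n) = 2^{−k} ∑_{y_1,…,y_k ∈ {0,1}} f(y_1,…,y_k,x_{k+1},…,x_n) (conditional expectation onto the σ-algebra of sets depending only on the last n−k coordinates), with the convention E^*_{n+1} = E^*_n. Then there is no universal constant: for every c > 0 there exist n and functions f_0,…,f_n on Ω_n satisfying E^*_{k+1} f_k = 0 for all 0 ≤ k ≤ n, for which E (∑_{k=0}^n |f_k|²)^{1/2} < c · E (∑_{k=0}^n |E^*_k f_k|²)^{1/2}. -/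

import Mathlib

open MeasureTheory

/-- Expectation with respect to the uniform probability measure on `{0,1}^n`. -/
noncomputable def cubeExpect (n : ℕ) (g : (Fin n → Bool) → ℝ) : ℝ :=
  (∑ x : Fin n → Bool, g x) / 2 ^ n

/-- The averaging operator `E^*_k` on `{0,1}^n`: average over the first `k` coordinates
(conditional expectation onto the σ-algebra of sets depending only on the last `n - k`
coordinates).  For `k ≥ n` this is the full average, so in particular
`cubeEstar n (n+1) = cubeEstar n n`. -/
noncomputable def cubeEstar (n k : ℕ) (f : (Fin n → Bool) → ℝ) : (Fin n → Bool) → ℝ :=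
  fun x => (∑ y : Fin n → Bool, f (fun i => if (i : ℕ) < k then y i else x i)) / 2 ^ n

namespace Stmt6Aux

open Finset

/-- Coordinate factors of our functions. -/
noncomputable def g (n k : ℕ) (i : Fin n) (b : Bool) : ℝ :=
  if (i : ℕ) = k then (if b then 1 else -1)
  else if (i : ℕ) % 2 = 0 then (if b then 1 else 0) else 1

/-- The counterexample functions. -/
noncomputable def F (n k : ℕ) : (Fin n → Bool) → ℝ :=
  fun x => if k % 2 = 1 ∧ k < n then ∏ i : Fin n, g n k i (x i) else 0

/-- Indicator that all even coordinates `≥ 2t` are true. -/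
noncomputable def indB (n t : ℕ) (x : Fin n → Bool) : ℝ :=
  if ∀ i : Fin n, (i : ℕ) % 2 = 0 → 2 * t ≤ (i : ℕ) → x i = true then 1 else 0

/-- Sum over the cube of a product of per-coordinate factors. -/
lemma sum_cube_prod {n : ℕ} (G : Fin n → Bool → ℝ) :
    ∑ x : Fin n → Bool, ∏ i : Fin n, G i (x i) = ∏ i : Fin n, (G i true + G i false) := by
  rw [← Fintype.piFinset_univ, ← Finset.prod_univ_sum]
  exact Finset.prod_congr rfl fun i _ => Fintype.sum_bool _

/-- `cubeEstar` of a product of per-coordinate factors. -/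
lemma estar_prod {n : ℕ} (k : ℕ) (G : Fin n → Bool → ℝ) (x : Fin n → Bool) :
    cubeEstar n k (fun z => ∏ i : Fin n, G i (z i)) x
      = (∏ i : Fin n, (if (i : ℕ) < k then G i true + G i false else 2 * G i (x i))) / 2 ^ n := by
  unfold cubeEstar
  congr 1
  set H : Fin n → Bool → ℝ := fun i b => if (i : ℕ) < k then G i b else G i (x i) with hH
  have h1 : ∀ y : Fin n → Bool,
      (∏ i : Fin n, G i (if (i : ℕ) < k then y i else x i)) = ∏ i : Fin n, H i (y i) := by
    intro y
    refine Finset.prod_congr rfl fun i _ => ?_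
    by_cases h : (i : ℕ) < k <;> simp [hH, h]
  rw [Finset.sum_congr rfl fun y _ => h1 y, sum_cube_prod H]
  refine Finset.prod_congr rfl fun i _ => ?_
  by_cases h : (i : ℕ) < k <;> simp [hH, h] <;> ring

/-- Counting products: evens `≥ 2t` give `1`, everything else gives `2`. -/
lemma prod_count1 : ∀ u t : ℕ,
    (∏ i ∈ range (2 * u), (if i % 2 = 0 ∧ 2 * t ≤ i then (1 : ℝ) else 2)) = 2 ^ (u + min t u) := by
  intro u
  induction u with
  | zero => intro t; simp
  | succ u ih =>
    intro t
    have hsplit : (∏ i ∈ range (2 * (u + 1)), (if i % 2 = 0 ∧ 2 * t ≤ i then (1 : ℝ) else 2))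
        = (∏ i ∈ range (2 * u), (if i % 2 = 0 ∧ 2 * t ≤ i then (1 : ℝ) else 2))
          * (if (2 * u) % 2 = 0 ∧ 2 * t ≤ 2 * u then (1 : ℝ) else 2)
          * (if (2 * u + 1) % 2 = 0 ∧ 2 * t ≤ 2 * u + 1 then (1 : ℝ) else 2) := by
      have h2 : 2 * (u + 1) = (2 * u + 1) + 1 := by ring
      rw [h2, Finset.prod_range_succ, Finset.prod_range_succ]
    rw [hsplit, ih t]
    have hodd : ¬((2 * u + 1) % 2 = 0 ∧ 2 * t ≤ 2 * u + 1) := by omega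
    rw [if_neg hodd]
    by_cases h : t ≤ u
    · have h1 : (2 * u) % 2 = 0 ∧ 2 * t ≤ 2 * u := by omega
      rw [if_pos h1]
      have e : u + 1 + min t (u + 1) = (u + min t u) + 1 := by omega
      rw [e, pow_succ]
      ring
    · have h1 : ¬((2 * u) % 2 = 0 ∧ 2 * t ≤ 2 * u) := by omega
      rw [if_neg h1]
      have e : u + 1 + min t (u + 1) = (u + min t u) + 1 + 1 := by omega
      rw [e, pow_succ, pow_succ]

/-- Counting products: evens `< 2d` give `1`, everything else gives `2`. -/
lemma prod_count2 : ∀ u d : ℕ,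
    (∏ i ∈ range (2 * u), (if i % 2 = 0 ∧ i < 2 * d then (1 : ℝ) else 2)) = 2 ^ (2 * u - min u d) := by
  intro u
  induction u with
  | zero => intro d; simp
  | succ u ih =>
    intro d
    have hsplit : (∏ i ∈ range (2 * (u + 1)), (if i % 2 = 0 ∧ i < 2 * d then (1 : ℝ) else 2))
        = (∏ i ∈ range (2 * u), (if i % 2 = 0 ∧ i < 2 * d then (1 : ℝ) else 2))
          * (if (2 * u) % 2 = 0 ∧ 2 * u < 2 * d then (1 : ℝ) else 2)
          * (if (2 * u + 1) % 2 = 0 ∧ 2 * u + 1 < 2 * d then (1 : ℝ) else 2) := by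
      have h2 : 2 * (u + 1) = (2 * u + 1) + 1 := by ring
      rw [h2, Finset.prod_range_succ, Finset.prod_range_succ]
    rw [hsplit, ih d]
    have hodd : ¬((2 * u + 1) % 2 = 0 ∧ 2 * u + 1 < 2 * d) := by omega
    rw [if_neg hodd]
    by_cases h : u < d
    · have h1 : (2 * u) % 2 = 0 ∧ 2 * u < 2 * d := by omega
      rw [if_pos h1]
      have e : 2 * (u + 1) - min (u + 1) d = (2 * u - min u d) + 1 := by omega
      rw [e, pow_succ]
      ring
    · have h1 : ¬((2 * u) % 2 = 0 ∧ 2 * u < 2 * d) := by omega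
      rw [if_neg h1]
      have e : 2 * (u + 1) - min (u + 1) d = (2 * u - min u d) + 1 + 1 := by omega
      rw [e, pow_succ, pow_succ]

/-- Product of indicator factors equals the indicator `indB`. -/
lemma prod_indicator {n : ℕ} (t : ℕ) (x : Fin n → Bool) :
    (∏ i : Fin n, (if (i : ℕ) % 2 = 0 ∧ 2 * t ≤ (i : ℕ) then (if x i then (1:ℝ) else 0) else 1))
      = indB n t x := by
  unfold indB
  by_cases h : ∀ i : Fin n, (i : ℕ) % 2 = 0 → 2 * t ≤ (i : ℕ) → x i = true
  · rw [if_pos h]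
    refine Finset.prod_eq_one fun i _ => ?_
    by_cases hc : (i : ℕ) % 2 = 0 ∧ 2 * t ≤ (i : ℕ)
    · rw [if_pos hc, h i hc.1 hc.2, if_pos rfl]
    · rw [if_neg hc]
  · rw [if_neg h]
    push_neg at h
    obtain ⟨i, h1, h2, h3⟩ := h
    refine Finset.prod_eq_zero (Finset.mem_univ i) ?_
    rw [if_pos ⟨h1, h2⟩]
    simp [h3]

/-- Sum of `indB` over the cube. -/
lemma sum_indB {m : ℕ} (t : ℕ) (ht : t ≤ m) :
    ∑ x : Fin (2 * m) → Bool, indB (2 * m) t x = 2 ^ (m + t) := by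
  set H : Fin (2 * m) → Bool → ℝ := fun i b =>
    if (i : ℕ) % 2 = 0 ∧ 2 * t ≤ (i : ℕ) then (if b then (1:ℝ) else 0) else 1 with hH
  have h1 : ∀ x : Fin (2 * m) → Bool, indB (2 * m) t x = ∏ i : Fin (2 * m), H i (x i) := by
    intro x
    rw [← prod_indicator t x]
  rw [Finset.sum_congr rfl fun x _ => h1 x, sum_cube_prod H]
  have h2 : (∏ i : Fin (2 * m), (H i true + H i false))
      = ∏ i ∈ range (2 * m), (if i % 2 = 0 ∧ 2 * t ≤ i then (1:ℝ) else 2) := by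
    rw [← Fin.prod_univ_eq_prod_range
      (fun i => if i % 2 = 0 ∧ 2 * t ≤ i then (1:ℝ) else 2) (2 * m)]
    refine Finset.prod_congr rfl fun i _ => ?_
    by_cases hc : (i : ℕ) % 2 = 0 ∧ 2 * t ≤ (i : ℕ) <;> simp [hH, hc] <;> norm_num
  rw [h2, prod_count1 m t, min_eq_left ht]

/-- When the defining condition of `F` fails, `F` is the zero function. -/
lemma F_eq_zero {n k : ℕ} (h : ¬(k % 2 = 1 ∧ k < n)) : F n k = fun _ => 0 := by
  funext x
  rw [F, if_neg h]

/-- When the defining condition holds, `F` is the product function. -/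
lemma F_eq_prod {n k : ℕ} (h : k % 2 = 1 ∧ k < n) :
    F n k = fun z => ∏ i : Fin n, g n k i (z i) := by
  funext x
  rw [F, if_pos h]

lemma estar_zero (n j : ℕ) : cubeEstar n j (fun _ => 0) = 0 := by
  funext x
  simp [cubeEstar]

/-- The martingale-difference constraint. -/
lemma constraint (m : ℕ) : ∀ k ≤ 2 * m, cubeEstar (2 * m) (k + 1) (F (2 * m) k) = 0 := by
  intro k hk
  by_cases h : k % 2 = 1 ∧ k < 2 * m
  · funext x
    rw [F_eq_prod h, estar_prod]
    have hkm : k < 2 * m := h.2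
    have hz : (if (((⟨k, hkm⟩ : Fin (2 * m)) : ℕ)) < k + 1 then
          g (2 * m) k ⟨k, hkm⟩ true + g (2 * m) k ⟨k, hkm⟩ false
        else 2 * g (2 * m) k ⟨k, hkm⟩ (x ⟨k, hkm⟩)) = 0 := by
      rw [if_pos (Nat.lt_succ_self k)]
      simp [g]
    rw [Finset.prod_eq_zero (Finset.mem_univ (⟨k, hkm⟩ : Fin (2 * m))) hz]
    simp
  · rw [F_eq_zero h, estar_zero]

/-- Square of `F` is the indicator of `A = B₀`. -/
lemma F_sq {n k : ℕ} (h : k % 2 = 1 ∧ k < n) (x : Fin n → Bool) :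
    (F n k x) ^ 2 = indB n 0 x := by
  rw [F, if_pos h, ← prod_indicator 0 x, ← Finset.prod_pow]
  refine Finset.prod_congr rfl fun i _ => ?_
  by_cases hik : (i : ℕ) = k
  · have hodd : ¬((i : ℕ) % 2 = 0 ∧ 2 * 0 ≤ (i : ℕ)) := by omega
    rw [if_neg hodd, g, if_pos hik]
    cases x i <;> norm_num
  · rw [g, if_neg hik]
    by_cases he : (i : ℕ) % 2 = 0
    · rw [if_pos he, if_pos (show (i : ℕ) % 2 = 0 ∧ 2 * 0 ≤ (i : ℕ) from ⟨he, by omega⟩)]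
      cases x i <;> norm_num
    · rw [if_neg he, if_neg (by omega : ¬((i : ℕ) % 2 = 0 ∧ 2 * 0 ≤ (i : ℕ)))]
      norm_num

lemma card_odd : ∀ m : ℕ, ((range (2 * m)).filter (fun k => k % 2 = 1)).card = m := by
  intro m
  induction m with
  | zero => simp
  | succ m ih =>
    have h2 : 2 * (m + 1) = (2 * m + 1) + 1 := by ring
    rw [h2, Finset.range_add_one, Finset.range_add_one, Finset.filter_insert, Finset.filter_insert,
      if_pos (by omega : (2 * m + 1) % 2 = 1), if_neg (by omega : ¬((2 * m) % 2 = 1))]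
    rw [Finset.card_insert_of_notMem (by simp), ih]

/-- Pointwise value of the sum of squares. -/
lemma sum_F_sq (m : ℕ) (x : Fin (2 * m) → Bool) :
    ∑ k ∈ range (2 * m + 1), (F (2 * m) k x) ^ 2 = (m : ℝ) * indB (2 * m) 0 x := by
  have h1 : ∀ k, (F (2 * m) k x) ^ 2
      = if k % 2 = 1 ∧ k < 2 * m then indB (2 * m) 0 x else 0 := by
    intro k
    by_cases h : k % 2 = 1 ∧ k < 2 * m
    · rw [if_pos h, F_sq h]
    · rw [if_neg h, F, if_neg h]
      norm_num
  rw [Finset.sum_congr rfl fun k _ => h1 k, Finset.sum_ite, Finset.sum_const, Finset.sum_const,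
    smul_zero, add_zero]
  have hcard : ((range (2 * m + 1)).filter (fun k => k % 2 = 1 ∧ k < 2 * m)).card = m := by
    have : (range (2 * m + 1)).filter (fun k => k % 2 = 1 ∧ k < 2 * m)
        = (range (2 * m)).filter (fun k => k % 2 = 1) := by
      ext k
      simp only [Finset.mem_filter, Finset.mem_range]
      omega
    rw [this, card_odd]
  rw [hcard, nsmul_eq_mul]

/-- Key value of `E^*_{2d-1} f_{2d-1}` squared, on the event `B_d`. -/
lemma estar_F_self {m d : ℕ} (hd1 : 1 ≤ d) (hdm : d ≤ m) (x : Fin (2 * m) → Bool)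
    (hx : ∀ i : Fin (2 * m), (i : ℕ) % 2 = 0 → 2 * d ≤ (i : ℕ) → x i = true) :
    (cubeEstar (2 * m) (2 * d - 1) (F (2 * m) (2 * d - 1)) x) ^ 2 = ((1 / 2 : ℝ) ^ d) ^ 2 := by
  have hk : (2 * d - 1) % 2 = 1 ∧ 2 * d - 1 < 2 * m := by constructor <;> omega
  have hkm : 2 * d - 1 < 2 * m := hk.2
  rw [F_eq_prod hk, estar_prod]
  have hfac : ∀ i : Fin (2 * m),
      (if (i : ℕ) < 2 * d - 1 then
          g (2 * m) (2 * d - 1) i true + g (2 * m) (2 * d - 1) i false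
        else 2 * g (2 * m) (2 * d - 1) i (x i))
      = (if i = (⟨2 * d - 1, hkm⟩ : Fin (2 * m)) then (if x i then (1:ℝ) else -1) else 1)
        * (if ((i : ℕ) % 2 = 0 ∧ (i : ℕ) < 2 * d) then (1:ℝ) else 2) := by
    intro i
    by_cases hik : (i : ℕ) = 2 * d - 1
    · have h1 : ¬((i : ℕ) < 2 * d - 1) := by omega
      have h2 : i = (⟨2 * d - 1, hkm⟩ : Fin (2 * m)) := Fin.ext hik
      have h3 : ¬((i : ℕ) % 2 = 0 ∧ (i : ℕ) < 2 * d) := by omega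
      simp only [g, if_neg h1, if_pos hik, if_pos h2, if_neg h3]
      ring
    · have h2 : i ≠ (⟨2 * d - 1, hkm⟩ : Fin (2 * m)) := by
        intro hcon
        exact hik (by rw [hcon])
      by_cases hlt : (i : ℕ) < 2 * d - 1
      · by_cases he : (i : ℕ) % 2 = 0
        · have h3 : ((i : ℕ) % 2 = 0 ∧ (i : ℕ) < 2 * d) := ⟨he, by omega⟩
          simp only [g, if_pos hlt, if_neg hik, if_pos he, if_neg h2, if_pos h3]
          norm_num
        · have h3 : ¬((i : ℕ) % 2 = 0 ∧ (i : ℕ) < 2 * d) := by omega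
          simp only [g, if_pos hlt, if_neg hik, if_neg he, if_neg h2, if_neg h3]
          norm_num
      · by_cases he : (i : ℕ) % 2 = 0
        · have hge : 2 * d ≤ (i : ℕ) := by omega
          have hxi : x i = true := hx i he hge
          have h3 : ¬((i : ℕ) % 2 = 0 ∧ (i : ℕ) < 2 * d) := by omega
          simp only [g, if_neg hlt, if_neg hik, if_pos he, hxi, if_neg h2, if_neg h3]
          norm_num
        · have h3 : ¬((i : ℕ) % 2 = 0 ∧ (i : ℕ) < 2 * d) := by omega
          simp only [g, if_neg hlt, if_neg hik, if_neg he, if_neg h2, if_neg h3]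
          norm_num
  rw [Finset.prod_congr rfl fun i _ => hfac i, Finset.prod_mul_distrib]
  have hprodS : (∏ i : Fin (2 * m),
      (if i = (⟨2 * d - 1, hkm⟩ : Fin (2 * m)) then (if x i then (1:ℝ) else -1) else 1))
      = (if x (⟨2 * d - 1, hkm⟩ : Fin (2 * m)) then (1:ℝ) else -1) := by
    rw [Finset.prod_ite_eq' Finset.univ (⟨2 * d - 1, hkm⟩ : Fin (2 * m))
      (fun i => if x i then (1:ℝ) else -1)]
    simp
  have hprodM : (∏ i : Fin (2 * m),
      (if ((i : ℕ) % 2 = 0 ∧ (i : ℕ) < 2 * d) then (1:ℝ) else 2)) = 2 ^ (2 * m - d) := by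
    calc (∏ i : Fin (2 * m), (if ((i : ℕ) % 2 = 0 ∧ (i : ℕ) < 2 * d) then (1:ℝ) else 2))
        = ∏ i ∈ range (2 * m), (if (i % 2 = 0 ∧ i < 2 * d) then (1:ℝ) else 2) :=
          Fin.prod_univ_eq_prod_range (fun j => if (j % 2 = 0 ∧ j < 2 * d) then (1:ℝ) else 2) (2 * m)
      _ = 2 ^ (2 * m - d) := by rw [prod_count2 m d, min_eq_right hdm]
  rw [hprodS, hprodM]
  have hner : (2 : ℝ) ^ (2 * m - d) ≠ 0 := pow_ne_zero _ two_ne_zero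
  have h2m : (2 : ℝ) ^ (2 * m) = 2 ^ (2 * m - d) * 2 ^ d := by
    rw [← pow_add]
    congr 1
    omega
  have hhalf : (2 : ℝ) ^ (2 * m - d) / 2 ^ (2 * m) = (1 / 2) ^ d := by
    rw [h2m, div_mul_cancel_left₀ hner, one_div, inv_pow]
  rw [mul_div_assoc, hhalf, mul_pow]
  have hs : ((if x (⟨2 * d - 1, hkm⟩ : Fin (2 * m)) then (1:ℝ) else -1)) ^ 2 = 1 := by
    cases hb : x (⟨2 * d - 1, hkm⟩ : Fin (2 * m)) <;> norm_num
  rw [hs, one_mul]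

/-- Exact value of the left-hand side. -/
lemma lhs_eq (m : ℕ) :
    cubeExpect (2 * m) (fun x => Real.sqrt (∑ k ∈ range (2 * m + 1), (F (2 * m) k x) ^ 2))
      = Real.sqrt m * 2 ^ m / 2 ^ (2 * m) := by
  unfold cubeExpect
  congr 1
  have h1 : ∀ x : Fin (2 * m) → Bool,
      Real.sqrt (∑ k ∈ range (2 * m + 1), (F (2 * m) k x) ^ 2)
        = Real.sqrt m * indB (2 * m) 0 x := by
    intro x
    rw [sum_F_sq]
    unfold indB
    by_cases h : ∀ i : Fin (2 * m), (i : ℕ) % 2 = 0 → 2 * 0 ≤ (i : ℕ) → x i = true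
    · rw [if_pos h, mul_one, mul_one]
    · rw [if_neg h, mul_zero, mul_zero, Real.sqrt_zero]
  exact (Finset.sum_congr rfl fun x _ => h1 x).trans
    (by rw [← Finset.mul_sum, sum_indB 0 (Nat.zero_le m)]; norm_num)

/-- Geometric sums. -/
lemma geom : ∀ a b : ℕ, a ≤ b → ∑ t ∈ Ico a b, (1 / 2 : ℝ) ^ (t + 1) = (1 / 2) ^ a - (1 / 2) ^ b := by
  intro a b hab
  induction b, hab using Nat.le_induction with
  | base => simp
  | succ b hb ih =>
    rw [Finset.sum_Ico_succ_top hb, ih, pow_succ]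
    ring

/-- The key pointwise lower bound for the right-hand side integrand. -/
lemma key_pointwise (m : ℕ) (hm : 1 ≤ m) (x : Fin (2 * m) → Bool) :
    (∑ t ∈ Ico 1 m, (1 / 2 : ℝ) ^ (t + 1) * indB (2 * m) t x) + (1 / 2) ^ m
      ≤ Real.sqrt (∑ k ∈ range (2 * m + 1), (cubeEstar (2 * m) k (F (2 * m) k) x) ^ 2) := by
  have hBm : ∀ i : Fin (2 * m), (i : ℕ) % 2 = 0 → 2 * m ≤ (i : ℕ) → x i = true := by
    intro i _ h2
    exact absurd i.isLt (by omega)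
  have hex : ∃ t, 1 ≤ t ∧ ∀ i : Fin (2 * m), (i : ℕ) % 2 = 0 → 2 * t ≤ (i : ℕ) → x i = true :=
    ⟨m, hm, hBm⟩
  have hspec := Nat.find_spec hex
  have hd1 : 1 ≤ Nat.find hex := hspec.1
  have hdB := hspec.2
  have hdm : Nat.find hex ≤ m := Nat.find_min' hex ⟨hm, hBm⟩
  set d := Nat.find hex with hd
  -- the lower integrand equals (1/2)^d
  have hindB : ∀ t ∈ Ico 1 m, (1 / 2 : ℝ) ^ (t + 1) * indB (2 * m) t x
      = if d ≤ t then (1 / 2 : ℝ) ^ (t + 1) else 0 := by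
    intro t ht
    rw [Finset.mem_Ico] at ht
    by_cases hdt : d ≤ t
    · have hBt : ∀ i : Fin (2 * m), (i : ℕ) % 2 = 0 → 2 * t ≤ (i : ℕ) → x i = true := by
        intro i h1 h2
        exact hdB i h1 (by omega)
      rw [if_pos hdt, indB, if_pos hBt, mul_one]
    · have hnot := Nat.find_min hex (show t < d by omega)
      push_neg at hnot
      have hBt : ¬(∀ i : Fin (2 * m), (i : ℕ) % 2 = 0 → 2 * t ≤ (i : ℕ) → x i = true) := by
        intro hcon
        obtain ⟨i, h1, h2, h3⟩ := hnot ht.1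
        exact h3 (hcon i h1 h2)
      rw [if_neg hdt, indB, if_neg hBt, mul_zero]
  have hfilter : (Ico 1 m).filter (fun t => d ≤ t) = Ico d m := by
    ext t
    simp only [Finset.mem_filter, Finset.mem_Ico]
    omega
  have hsum : (∑ t ∈ Ico 1 m, (1 / 2 : ℝ) ^ (t + 1) * indB (2 * m) t x) + (1 / 2) ^ m
      = (1 / 2 : ℝ) ^ d := by
    rw [Finset.sum_congr rfl hindB, Finset.sum_ite, Finset.sum_const, smul_zero, add_zero,
      hfilter, geom d m hdm]
    ring
  rw [hsum]
  have hnonneg : (0 : ℝ) ≤ ∑ k ∈ range (2 * m + 1), (cubeEstar (2 * m) k (F (2 * m) k) x) ^ 2 :=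
    Finset.sum_nonneg fun k _ => sq_nonneg _
  rw [Real.le_sqrt (by positivity) hnonneg]
  have hmem : 2 * d - 1 ∈ range (2 * m + 1) := by
    rw [Finset.mem_range]
    omega
  calc ((1 / 2 : ℝ) ^ d) ^ 2
      = (cubeEstar (2 * m) (2 * d - 1) (F (2 * m) (2 * d - 1)) x) ^ 2 :=
        (estar_F_self hd1 hdm x hdB).symm
    _ ≤ ∑ k ∈ range (2 * m + 1), (cubeEstar (2 * m) k (F (2 * m) k) x) ^ 2 :=
        Finset.single_le_sum (f := fun k => (cubeEstar (2 * m) k (F (2 * m) k) x) ^ 2)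
          (fun k _ => sq_nonneg _) hmem

/-- Lower bound for the right-hand side. -/
lemma rhs_ge (m : ℕ) (hm : 1 ≤ m) :
    ((m : ℝ) + 1) / 2 * 2 ^ m / 2 ^ (2 * m)
      ≤ cubeExpect (2 * m)
          (fun x => Real.sqrt (∑ k ∈ range (2 * m + 1), (cubeEstar (2 * m) k (F (2 * m) k) x) ^ 2)) := by
  unfold cubeExpect
  have hcard : (Finset.univ : Finset (Fin (2 * m) → Bool)).card = 2 ^ (2 * m) := by
    rw [Finset.card_univ]
    simp [Fintype.card_fun]
  have hstep1 : ((m : ℝ) + 1) / 2 * 2 ^ m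
      ≤ ∑ x : Fin (2 * m) → Bool,
          ((∑ t ∈ Ico 1 m, (1 / 2 : ℝ) ^ (t + 1) * indB (2 * m) t x) + (1 / 2) ^ m) := by
    rw [Finset.sum_add_distrib, Finset.sum_comm, Finset.sum_const, hcard, nsmul_eq_mul]
    have hterm : ∀ t ∈ Ico 1 m,
        (∑ x : Fin (2 * m) → Bool, (1 / 2 : ℝ) ^ (t + 1) * indB (2 * m) t x) = 2 ^ m / 2 := by
      intro t ht
      rw [Finset.mem_Ico] at ht
      rw [← Finset.mul_sum, sum_indB t (le_of_lt ht.2), div_pow, one_pow, pow_add, pow_add,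
        pow_one]
      field_simp
    rw [Finset.sum_congr rfl hterm, Finset.sum_const, Nat.card_Ico, nsmul_eq_mul]
    have hc1 : ((m - 1 : ℕ) : ℝ) = (m : ℝ) - 1 := by
      rw [Nat.cast_sub hm]
      norm_num
    rw [hc1]
    push_cast
    have hc2 : (2 : ℝ) ^ (2 * m) * (1 / 2) ^ m = 2 ^ m := by
      rw [div_pow, one_pow, two_mul, pow_add]
      field_simp
    rw [hc2]
    apply le_of_eq
    ring
  have hAB : ((m : ℝ) + 1) / 2 * 2 ^ m
      ≤ ∑ x : Fin (2 * m) → Bool,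
          Real.sqrt (∑ k ∈ range (2 * m + 1), (cubeEstar (2 * m) k (F (2 * m) k) x) ^ 2) :=
    hstep1.trans (Finset.sum_le_sum fun x _ => key_pointwise m hm x)
  have hD : (0:ℝ) ≤ 2 ^ (2 * m) := by positivity
  exact div_le_div_of_nonneg_right hAB hD

end Stmt6Aux

/-- failure of the `L¹` Stein inequality for the co-dyadic filtration
on `{0,1}^n`, even under the assumption `E^*_{k+1} f_k = 0` (Theorem `drzewa`). -/
theorem stmt6 :
    ∀ c : ℝ, 0 < c → ∃ n : ℕ, ∃ f : ℕ → (Fin n → Bool) → ℝ,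
      (∀ k ≤ n, cubeEstar n (k + 1) (f k) = 0) ∧
      cubeExpect n (fun x => Real.sqrt (∑ k ∈ Finset.range (n + 1), (f k x) ^ 2)) <
        c * cubeExpect n
            (fun x => Real.sqrt (∑ k ∈ Finset.range (n + 1), (cubeEstar n k (f k) x) ^ 2)) := by
  intro c hc
  set s : ℕ := ⌈(2:ℝ)/c⌉₊ + 1 with hs
  set m : ℕ := s ^ 2 with hmdef
  have hs1 : 1 ≤ s := by omega
  have hm1 : 1 ≤ m := by
    calc 1 = 1 ^ 2 := by norm_num
    _ ≤ s ^ 2 := Nat.pow_le_pow_left hs1 2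
  refine ⟨2 * m, Stmt6Aux.F (2 * m), Stmt6Aux.constraint m, ?_⟩
  rw [Stmt6Aux.lhs_eq m]
  have hs1R : (1 : ℝ) ≤ (s : ℕ) := by exact_mod_cast hs1
  have hcs : 2 < c * s := by
    have h1 : (2 : ℝ) / c ≤ (⌈(2:ℝ)/c⌉₊ : ℝ) := Nat.le_ceil _
    have h2 : (2 : ℝ) / c < s := by
      rw [hs]
      push_cast
      linarith
    calc (2 : ℝ) = 2 / c * c := by field_simp
    _ < (s : ℝ) * c := by
        apply mul_lt_mul_of_pos_right h2 hc
    _ = c * s := by ring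
  have hsqrt : Real.sqrt (m : ℝ) = (s : ℝ) := by
    rw [hmdef]
    push_cast
    exact Real.sqrt_sq (by positivity)
  have hmcast : ((m : ℕ) : ℝ) = (s : ℝ) ^ 2 := by
    rw [hmdef]
    push_cast
    ring
  have key : Real.sqrt (m : ℝ) * 2 ^ m / 2 ^ (2 * m)
      < c * (((m : ℝ) + 1) / 2 * 2 ^ m / 2 ^ (2 * m)) := by
    rw [hsqrt, ← mul_div_assoc]
    have hD : (0 : ℝ) < 2 ^ (2 * m) := by positivity
    apply div_lt_div_of_pos_right ?_ hD
    case _ =>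
      have h2m : (0 : ℝ) < 2 ^ m := by positivity
      have hgoal : (s : ℝ) < c * (((m : ℝ) + 1) / 2) := by
        rw [hmcast]
        nlinarith [mul_pos (sub_pos.mpr hcs) (lt_of_lt_of_le zero_lt_one hs1R), hc]
      calc (s : ℝ) * 2 ^ m < (c * (((m : ℝ) + 1) / 2)) * 2 ^ m :=
            mul_lt_mul_of_pos_right hgoal h2m
      _ = c * (((m : ℝ) + 1) / 2 * 2 ^ m) := by ring
  exact key.trans_le (mul_le_mul_of_nonneg_left (Stmt6Aux.rhs_ge m hm1) hc.le)
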